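/- Let R be a binary relation and m a 1-bounded pseudometric on the state set of a finite-state pLTS such that m(s,t) = 0 if s R t and m(s,t) = 1 otherwise. Then R is a probabilistic bisimulation if and only if m is a state-metric. -/

import Mathlib

open scoped Classical

/-- A (discrete) probability distribution over a finite set `S`. -/
structure FDist (S : Type*) [Fintype S] where
  f : S → ℝ
  nonneg : ∀ s, 0 ≤ f s
  sum_one : ∑ s, f s = 1

/-- The point distribution at `s`. -/
noncomputable def FDist.point {S : Type*} [Fintype S] (s : S) : FDist S where
  f := fun u => if u = s then 1 else 0
  nonneg := by intro u; by_cases h : u = s <;> simp [h]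
  sum_one := by simp

/-- The lifting `R†` of a relation to distributions: the smallest relation
relating point distributions of related states and closed under convex
combinations. -/
inductive Lift {S T : Type*} [Fintype S] [Fintype T] (R : S → T → Prop) :
    FDist S → FDist T → Prop
  | point {s : S} {t : T} :
      R s t → Lift R (FDist.point s) (FDist.point t)
  | convex (I : Finset ℕ) (p : ℕ → ℝ)
      (hp : ∀ i ∈ I, 0 ≤ p i) (hsum : ∑ i ∈ I, p i = 1)
      (Δs : ℕ → FDist S) (Θs : ℕ → FDist T)
      (h : ∀ i ∈ I, Lift R (Δs i) (Θs i))
      (Δ : FDist S) (Θ : FDist T)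
      (hΔ : Δ.f = ∑ i ∈ I, p i • (Δs i).f)
      (hΘ : Θ.f = ∑ i ∈ I, p i • (Θs i).f) :
      Lift R Δ Θ
/-- A probabilistic labelled transition system over a finite set of states. -/
structure PLTS (S : Type*) [Fintype S] (Act : Type*) where
  trans : S → Act → FDist S → Prop

/-- The derivatives of `s` under action `a`: `der(s,a) = {Δ | s −a→ Δ}`. -/
def der {S : Type*} [Fintype S] {Act : Type*} (L : PLTS S Act) (s : S) (a : Act) :
    Set (FDist S) :=
  { Δ | L.trans s a Δ }

/-- `R` is a probabilistic bisimulation if, whenever `s R t`, each transition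
of either state is matched by a transition of the other, with the resulting
distributions related by the lifted relation `R†`. -/
def IsBisimulation {S : Type*} [Fintype S] {Act : Type*} (L : PLTS S Act)
    (R : S → S → Prop) : Prop :=
  ∀ s t, R s t →
    (∀ a Δ, L.trans s a Δ → ∃ Θ, L.trans t a Θ ∧ Lift R Δ Θ) ∧
    (∀ a Θ, L.trans t a Θ → ∃ Δ, L.trans s a Δ ∧ Lift R Δ Θ)

/-- Probabilistic bisimilarity `∼`: the largest probabilistic bisimulation. -/
def Bisim {S : Type*} [Fintype S] {Act : Type*} (L : PLTS S Act) (s t : S) : Prop :=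
  ∃ R, IsBisimulation L R ∧ R s t

/-- A 1-bounded pseudometric on `S`: a function `m : S × S → [0,1]` with
`m s s = 0`, symmetry and the triangle inequality. -/
structure BPM (S : Type*) where
  d : S → S → ℝ
  nonneg : ∀ s t, 0 ≤ d s t
  le_one : ∀ s t, d s t ≤ 1
  refl : ∀ s, d s s = 0
  symm : ∀ s t, d s t = d t s
  triangle : ∀ s t u, d s t ≤ d s u + d u t

/-- The order on 1-bounded pseudometrics: `m₁ ⪯ m₂` iff `m₁ s t ≥ m₂ s t`
for all `s, t` (reversed pointwise order). -/
instance {S : Type*} : PartialOrder (BPM S) where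
  le m₁ m₂ := ∀ s t, m₂.d s t ≤ m₁.d s t
  le_refl m s t := le_refl _
  le_trans m₁ m₂ m₃ h₁ h₂ s t := le_trans (h₂ s t) (h₁ s t)
  le_antisymm m₁ m₂ h₁ h₂ := by
    cases m₁; cases m₂
    simp only [BPM.mk.injEq]
    funext s t
    exact le_antisymm (h₂ s t) (h₁ s t)

/-- The Kantorovich lifting `m̂` of a 1-bounded pseudometric `m` on the finite
set `S`, as the optimal value of the linear program:
maximise `∑ s, (Δ(s) − Θ(s))·x s` subject to `x s − x t ≤ m s t` and
`0 ≤ x s ≤ 1`. -/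
noncomputable def kant {S : Type*} [Fintype S] (m : S → S → ℝ)
    (Δ Θ : FDist S) : ℝ :=
  sSup { c | ∃ x : S → ℝ,
    (∀ s t, x s - x t ≤ m s t) ∧
    (∀ s, 0 ≤ x s ∧ x s ≤ 1) ∧
    c = ∑ s, (Δ.f s - Θ.f s) * x s }

/-- Supremum of a set of reals, with `sup ∅ = 0`. -/
noncomputable def hsup (A : Set ℝ) : ℝ := if A = ∅ then 0 else sSup A

/-- Infimum of a set of reals, with `inf ∅ = 1`. -/
noncomputable def hinf (A : Set ℝ) : ℝ := if A = ∅ then 1 else sInf A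

/-- The Hausdorff distance between `X, Y ⊆ Z` induced by a distance `d` on
`Z`: `H_d(X,Y) = max{ sup_{x∈X} inf_{y∈Y} d x y, sup_{y∈Y} inf_{x∈X} d y x }`,
with `inf ∅ = 1` and `sup ∅ = 0`. -/
noncomputable def hausdorff {Z : Type*} (d : Z → Z → ℝ) (X Y : Set Z) : ℝ :=
  max (hsup { v | ∃ x ∈ X, v = hinf { w | ∃ y ∈ Y, w = d x y } })
      (hsup { v | ∃ y ∈ Y, v = hinf { w | ∃ x ∈ X, w = d y x } })

/-- The function `F` on 1-bounded pseudometrics (given here by its value):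
`F(m)(s,t) = sup_{a ∈ Act} H_{m̂}(der(s,a), der(t,a))`. -/
noncomputable def Fval {S : Type*} [Fintype S] {Act : Type*} (L : PLTS S Act)
    (m : S → S → ℝ) (s t : S) : ℝ :=
  hsup { v | ∃ a : Act, v = hausdorff (kant m) (der L s a) (der L t a) }

/-- `m` is a state-metric if for all `ε ∈ [0,1)`, `m s t ≤ ε` implies that
every transition `s −a→ Δ` is matched by some `t −a→ Δ'` with
`m̂(Δ,Δ') ≤ ε`. -/
def StateMetric {S : Type*} [Fintype S] {Act : Type*} (L : PLTS S Act)
    (m : BPM S) : Prop :=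
  ∀ ε : ℝ, 0 ≤ ε → ε < 1 → ∀ s t, m.d s t ≤ ε →
    ∀ a Δ, L.trans s a Δ → ∃ Δ', L.trans t a Δ' ∧ kant m.d Δ Δ' ≤ ε


section Aux

variable {S : Type*} [Fintype S]

lemma lift_symm {R : S → S → Prop} (hsym : ∀ a b, R a b → R b a)
    {Δ Θ : FDist S} (h : Lift R Δ Θ) : Lift R Θ Δ := by
  induction h with
  | point hr => exact Lift.point (hsym _ _ hr)
  | convex I p hp hsum Δs Θs h Δ Θ hΔ hΘ ih =>
      exact Lift.convex I p hp hsum Θs Δs (fun i hi => ih i hi) Θ Δ hΘ hΔ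

lemma lift_sum_nonpos {R : S → S → Prop} {Δ Θ : FDist S} (h : Lift R Δ Θ)
    (x : S → ℝ) (hx : ∀ a b, R a b → x a - x b ≤ 0) :
    ∑ s, (Δ.f s - Θ.f s) * x s ≤ 0 := by
  induction h with
  | @point a b hr =>
      have e : ∑ s, ((FDist.point a).f s - (FDist.point b).f s) * x s = x a - x b := by
        simp [FDist.point, sub_mul, Finset.sum_sub_distrib, ite_mul]
      rw [e]; exact hx a b hr
  | convex I p hp hsum Δs Θs h Δ Θ hΔ hΘ ih =>
      have key : ∀ s, (Δ.f s - Θ.f s) * x s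
          = ∑ i ∈ I, p i * (((Δs i).f s - (Θs i).f s) * x s) := by
        intro s
        rw [hΔ, hΘ]
        simp only [Finset.sum_apply, Pi.smul_apply, smul_eq_mul]
        rw [← Finset.sum_sub_distrib, Finset.sum_mul]
        exact Finset.sum_congr rfl (fun i _ => by ring)
      calc ∑ s, (Δ.f s - Θ.f s) * x s
          = ∑ i ∈ I, p i * ∑ s, ((Δs i).f s - (Θs i).f s) * x s := by
            simp only [key, Finset.mul_sum]; exact Finset.sum_comm
        _ ≤ 0 := Finset.sum_nonpos fun i hi =>
            mul_nonpos_of_nonneg_of_nonpos (hp i hi) (ih i hi)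

lemma lift_of_kant_nonpos (R : S → S → Prop)
    (hrefl : ∀ s, R s s) (hsym : ∀ s t, R s t → R t s)
    (htr : ∀ s t u, R s t → R t u → R s u)
    (m : S → S → ℝ) (hm : ∀ s t, m s t = if R s t then 0 else 1)
    (Δ Θ : FDist S) (hk : kant m Δ Θ ≤ 0) : Lift R Δ Θ := by
  classical
  have hbdd : BddAbove {c | ∃ x : S → ℝ,
      (∀ s t, x s - x t ≤ m s t) ∧ (∀ s, 0 ≤ x s ∧ x s ≤ 1) ∧
      c = ∑ s, (Δ.f s - Θ.f s) * x s} := by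
    refine ⟨1, ?_⟩
    rintro c ⟨x, hfeas, hx, rfl⟩
    have hterm : ∀ s : S, (Δ.f s - Θ.f s) * x s ≤ Δ.f s := by
      intro s
      have h1 : (Δ.f s - Θ.f s) * x s ≤ Δ.f s * x s :=
        mul_le_mul_of_nonneg_right (by nlinarith [Θ.nonneg s]) (hx s).1
      have h2 : Δ.f s * x s ≤ Δ.f s * 1 :=
        mul_le_mul_of_nonneg_left (hx s).2 (Δ.nonneg s)
      linarith
    calc ∑ s, (Δ.f s - Θ.f s) * x s ≤ ∑ s, Δ.f s :=
          Finset.sum_le_sum fun s _ => hterm s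
      _ = 1 := Δ.sum_one
  have hfeasle : ∀ x : S → ℝ, (∀ s t, x s - x t ≤ m s t) → (∀ s, 0 ≤ x s ∧ x s ≤ 1) →
      ∑ s, (Δ.f s - Θ.f s) * x s ≤ 0 := by
    intro x h1 h2
    exact (le_csSup hbdd ⟨x, h1, h2, rfl⟩).trans hk
  -- class mass equality
  have hclass : ∀ s₀ : S, ∑ u, (if R s₀ u then Δ.f u else 0)
      = ∑ u, (if R s₀ u then Θ.f u else 0) := by
    intro s₀
    have hx1 : ∑ u, (Δ.f u - Θ.f u) * (if R s₀ u then (1:ℝ) else 0) ≤ 0 := by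
      apply hfeasle
      · intro u v
        rw [hm]
        by_cases hu : R s₀ u <;> by_cases hv : R s₀ v <;> by_cases hr : R u v <;>
          simp [hu, hv, hr] <;>
          first
            | linarith
            | exact absurd (htr _ _ _ hu hr) hv
      · intro u; split <;> norm_num
    have hx2 : ∑ u, (Δ.f u - Θ.f u) * (if R s₀ u then (0:ℝ) else 1) ≤ 0 := by
      apply hfeasle
      · intro u v
        rw [hm]
        by_cases hu : R s₀ u <;> by_cases hv : R s₀ v <;> by_cases hr : R u v <;>
          simp [hu, hv, hr] <;>
          first
            | linarith
            | exact absurd (htr _ _ _ hv (hsym _ _ hr)) hu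
      · intro u; split <;> norm_num
    have e1 : ∑ u, (Δ.f u - Θ.f u) * (if R s₀ u then (1:ℝ) else 0)
        = (∑ u, (if R s₀ u then Δ.f u else 0)) - ∑ u, (if R s₀ u then Θ.f u else 0) := by
      rw [← Finset.sum_sub_distrib]
      exact Finset.sum_congr rfl fun u _ => by split <;> ring
    have e3 : ∑ u, (Δ.f u - Θ.f u) = 0 := by
      rw [Finset.sum_sub_distrib, Δ.sum_one, Θ.sum_one]; ring
    have e2 : ∑ u, (Δ.f u - Θ.f u) * (if R s₀ u then (0:ℝ) else 1)
        = (∑ u, (Δ.f u - Θ.f u))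
          - ((∑ u, (if R s₀ u then Δ.f u else 0)) - ∑ u, (if R s₀ u then Θ.f u else 0)) := by
      rw [← e1, ← Finset.sum_sub_distrib]
      exact Finset.sum_congr rfl fun u _ => by split <;> ring
    rw [e1] at hx1
    rw [e2, e3] at hx2
    linarith
  -- the weight of the class of a state
  let W : S → ℝ := fun u => ∑ t, (if R u t then Θ.f t else 0)
  have hWdef : ∀ u, W u = ∑ t, (if R u t then Θ.f t else 0) := fun u => rfl
  have hW0 : ∀ u, 0 ≤ W u := by
    intro u; rw [hWdef]
    exact Finset.sum_nonneg fun t _ => by split <;> [exact Θ.nonneg t; exact le_rfl]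
  have hWz : ∀ s, W s = 0 → Δ.f s = 0 ∧ Θ.f s = 0 := by
    intro s hWs
    have hΘ0 : ∀ t ∈ Finset.univ, (if R s t then Θ.f t else 0) = 0 := by
      rw [← Finset.sum_eq_zero_iff_of_nonneg
        (fun t _ => by split <;> [exact Θ.nonneg t; exact le_rfl])]
      exact hWs
    have hΔsum : ∑ u, (if R s u then Δ.f u else 0) = 0 := by
      rw [hclass s]; exact hWs
    have hΔ0 : ∀ t ∈ Finset.univ, (if R s t then Δ.f t else 0) = 0 := by
      rw [← Finset.sum_eq_zero_iff_of_nonneg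
        (fun t _ => by split <;> [exact Δ.nonneg t; exact le_rfl])]
      exact hΔsum
    have h1 := hΔ0 s (Finset.mem_univ s)
    have h2 := hΘ0 s (Finset.mem_univ s)
    rw [if_pos (hrefl s)] at h1 h2
    exact ⟨h1, h2⟩
  have hWcongr : ∀ s u, R s u → W s = W u := by
    intro s u hsu
    rw [hWdef, hWdef]
    refine Finset.sum_congr rfl fun t _ => ?_
    by_cases h : R s t
    · rw [if_pos h, if_pos (htr _ _ _ (hsym _ _ hsu) h)]
    · rw [if_neg h, if_neg (fun h' => h (htr _ _ _ hsu h'))]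
  have hrow : ∀ s : S, ∑ t, (if R s t then Δ.f s * Θ.f t / W s else 0) = Δ.f s := by
    intro s
    have e : ∑ t, (if R s t then Δ.f s * Θ.f t / W s else 0)
        = (Δ.f s / W s) * W s := by
      rw [hWdef, Finset.mul_sum]
      refine Finset.sum_congr rfl fun t _ => ?_
      split
      · ring
      · ring
    rw [e]
    by_cases hWs : W s = 0
    · rw [hWs, mul_zero, (hWz s hWs).1]
    · rw [div_mul_cancel₀ _ hWs]
  have hcol : ∀ u : S, ∑ s, (if R s u then Δ.f s * Θ.f u / W s else 0) = Θ.f u := by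
    intro u
    have e : ∑ s, (if R s u then Δ.f s * Θ.f u / W s else 0)
        = (Θ.f u / W u) * ∑ s, (if R u s then Δ.f s else 0) := by
      rw [Finset.mul_sum]
      refine Finset.sum_congr rfl fun s _ => ?_
      by_cases h : R s u
      · rw [if_pos h, if_pos (hsym _ _ h), hWcongr s u h]; ring
      · rw [if_neg h, if_neg (fun h' => h (hsym _ _ h')), mul_zero]
    rw [e, hclass u, ← hWdef]
    by_cases hWu : W u = 0
    · rw [hWu, mul_zero, (hWz u hWu).2]
    · rw [div_mul_cancel₀ _ hWu]
  -- enumeration of pairs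
  have hSne : Nonempty S := by
    by_contra h
    rw [not_nonempty_iff] at h
    have h1 := Δ.sum_one
    rw [Finset.univ_eq_empty, Finset.sum_empty] at h1
    norm_num at h1
  haveI := hSne
  have hnpos : 0 < Fintype.card (S × S) := Fintype.card_pos
  let eqv := Fintype.equivFin (S × S)
  let dec : S × S → ℕ := fun q => (eqv q : ℕ)
  let enc : ℕ → S × S := fun i =>
    if h : i < Fintype.card (S × S) then eqv.symm ⟨i, h⟩ else eqv.symm ⟨0, hnpos⟩
  have hed : ∀ q, enc (dec q) = q := by
    intro q
    have hlt : dec q < Fintype.card (S × S) := (eqv q).2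
    simp only [enc, dec, dif_pos hlt, Fin.eta, Equiv.symm_apply_apply]
  have hdecinj : ∀ a ∈ (Finset.univ.filter (fun q : S × S => R q.1 q.2)),
      ∀ b ∈ (Finset.univ.filter (fun q : S × S => R q.1 q.2)), dec a = dec b → a = b := by
    intro a _ b _ hab
    have : enc (dec a) = enc (dec b) := by rw [hab]
    rwa [hed, hed] at this
  refine Lift.convex
    ((Finset.univ.filter (fun q : S × S => R q.1 q.2)).image dec)
    (fun i => Δ.f (enc i).1 * Θ.f (enc i).2 / W (enc i).1)
    (fun i _ => div_nonneg (mul_nonneg (Δ.nonneg _) (Θ.nonneg _)) (hW0 _))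
    ?_ (fun i => FDist.point (enc i).1) (fun i => FDist.point (enc i).2)
    ?_ Δ Θ ?_ ?_
  · -- sum of weights is 1
    rw [Finset.sum_image hdecinj]
    simp only [hed]
    rw [Finset.sum_filter, Fintype.sum_prod_type]
    rw [Finset.sum_congr rfl (fun s _ => hrow s)]
    exact Δ.sum_one
  · -- pointwise lift
    intro i hi
    rw [Finset.mem_image] at hi
    obtain ⟨q, hq, rfl⟩ := hi
    rw [Finset.mem_filter] at hq
    show Lift R (FDist.point (enc (dec q)).1) (FDist.point (enc (dec q)).2)
    rw [hed]
    exact Lift.point hq.2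
  · -- Δ decomposition
    funext u
    rw [Finset.sum_apply]
    simp only [Pi.smul_apply, smul_eq_mul]
    rw [Finset.sum_image hdecinj]
    simp only [hed, FDist.point]
    rw [Finset.sum_filter, Fintype.sum_prod_type]
    have inner : ∀ s : S, ∑ t, (if R s t then
        Δ.f s * Θ.f t / W s * (if u = s then (1:ℝ) else 0) else 0)
        = if u = s then Δ.f s else 0 := by
      intro s
      by_cases h : u = s
      · simp only [h, eq_self_iff_true, if_true, mul_one]
        exact hrow s
      · simp [h]
    rw [Finset.sum_congr rfl (fun s _ => inner s), Finset.sum_ite_eq]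
    simp
  · -- Θ decomposition
    funext u
    rw [Finset.sum_apply]
    simp only [Pi.smul_apply, smul_eq_mul]
    rw [Finset.sum_image hdecinj]
    simp only [hed, FDist.point]
    rw [Finset.sum_filter, Fintype.sum_prod_type, Finset.sum_comm]
    have inner : ∀ t : S, ∑ s, (if R s t then
        Δ.f s * Θ.f t / W s * (if u = t then (1:ℝ) else 0) else 0)
        = if u = t then Θ.f t else 0 := by
      intro t
      by_cases h : u = t
      · simp only [h, eq_self_iff_true, if_true, mul_one]
        exact hcol t
      · simp [h]
    rw [Finset.sum_congr rfl (fun t _ => inner t), Finset.sum_ite_eq]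
    simp

end Aux

/-- Let `m` be the 1-bounded pseudometric with `m(s,t) = 0` if `s R t` and
`m(s,t) = 1` otherwise. Then `R` is a probabilistic bisimulation iff `m` is a
state-metric. -/
theorem bisimulation_iff_stateMetric {S : Type*} [Fintype S] {Act : Type*}
    (L : PLTS S Act) (R : S → S → Prop) (m : BPM S)
    (hm : ∀ s t, m.d s t = if R s t then 0 else 1) :
    IsBisimulation L R ↔ StateMetric L m := by
  have hRrefl : ∀ s, R s s := by
    intro s; by_contra h
    have h0 := m.refl s
    rw [hm, if_neg h] at h0; norm_num at h0
  have hRsymm : ∀ s t, R s t → R t s := by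
    intro s t h; by_contra h'
    have h0 := m.symm s t
    rw [hm, hm, if_pos h, if_neg h'] at h0; norm_num at h0
  have hRtrans : ∀ s t u, R s t → R t u → R s u := by
    intro s t u h1 h2; by_contra h'
    have h0 := m.triangle s u t
    rw [hm s u, hm s t, hm t u, if_neg h', if_pos h1, if_pos h2] at h0; norm_num at h0
  constructor
  · intro hB ε hε0 hε1 s t hst a Δ hΔ
    have hRst : R s t := by
      by_contra h
      rw [hm, if_neg h] at hst; linarith
    obtain ⟨Θ, hΘtr, hLift⟩ := (hB s t hRst).1 a Δ hΔ
    refine ⟨Θ, hΘtr, ?_⟩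
    have hk : kant m.d Δ Θ ≤ 0 := by
      apply Real.sSup_le _ le_rfl
      rintro c ⟨x, hfeas, hx, rfl⟩
      apply lift_sum_nonpos hLift x
      intro u v huv
      have h := hfeas u v
      rwa [hm, if_pos huv] at h
    linarith
  · intro hSM s t hRst
    have hd : m.d s t ≤ 0 := by rw [hm, if_pos hRst]
    have hd' : m.d t s ≤ 0 := by rw [hm, if_pos (hRsymm _ _ hRst)]
    constructor
    · intro a Δ hΔ
      obtain ⟨Δ', h1, h2⟩ := hSM 0 le_rfl one_pos s t hd a Δ hΔ
      exact ⟨Δ', h1, lift_of_kant_nonpos R hRrefl hRsymm hRtrans m.d hm Δ Δ' h2⟩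
    · intro a Θ hΘ
      obtain ⟨Δ', h1, h2⟩ := hSM 0 le_rfl one_pos t s hd' a Θ hΘ
      exact ⟨Δ', h1, lift_symm hRsymm
        (lift_of_kant_nonpos R hRrefl hRsymm hRtrans m.d hm Θ Δ' h2)⟩
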